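/- arXiv:1907.03219 — 2 statements merged into one kernel-verified Lean document; each statement's English description precedes it below -/
import Mathlib

section
/- If every point in a nonempty bounded set 𝓛 = { x ∈ 𝒦 : e₁ᵀx = 1 } (with 𝒦 a closed convex cone) has quadratic value bounded above by some β* (i.e., β* > xᵀQ₀x for all x ∈ 𝓛), then the matrix β* e₁e₁ᵀ - Q₀ is strictly copositive on 𝒦: (t, x̄)ᵀ(β* e₁e₁ᵀ - Q₀)(t, x̄) > 0 for all nonzero (t, x̄) ∈ 𝒦, provided that (0, x̄) ∈ 𝒦 implies x̄ = 0. -/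
open Matrix

theorem stmt13 (k : ℕ) (K : Set (Fin (k + 1) → ℝ)) (hKc : IsClosed K)
    (hKconv : Convex ℝ K) (hcone : ∀ x ∈ K, ∀ t : ℝ, 0 ≤ t → t • x ∈ K)
    (h0 : ∀ x ∈ K, 0 ≤ x 0)
    (hrec : ∀ x ∈ K, x 0 = 0 → x = 0)
    (hne : ({z ∈ K | z 0 = 1}).Nonempty)
    (hbdd : Bornology.IsBounded {z ∈ K | z 0 = 1})
    (Q : Matrix (Fin (k + 1)) (Fin (k + 1)) ℝ) (hQ : Q.IsSymm)
    (β : ℝ) (hβ : ∀ z ∈ K, z 0 = 1 → z ⬝ᵥ Q.mulVec z < β) :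
    ∀ w ∈ K, w ≠ 0 →
      0 < w ⬝ᵥ (β • vecMulVec (Pi.single 0 1) (Pi.single 0 1) - Q).mulVec w := by
  intro w hw hwne
  have hw0 : 0 < w 0 := by
    rcases lt_or_eq_of_le (h0 w hw) with h | h
    · exact h
    · exact absurd (hrec w hw h.symm) hwne
  have hz : (w 0)⁻¹ • w ∈ K := hcone w hw _ (inv_nonneg.mpr hw0.le)
  have hz0 : ((w 0)⁻¹ • w) 0 = 1 := by
    simp [inv_mul_cancel₀ hw0.ne']
  have hq := hβ _ hz hz0
  have hq' : (w 0)⁻¹ * (w 0)⁻¹ * (w ⬝ᵥ Q.mulVec w) < β := by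
    simpa [Matrix.mulVec_smul, smul_dotProduct, dotProduct_smul, mul_assoc] using hq
  have key : w ⬝ᵥ Q.mulVec w < β * (w 0 * w 0) := by
    have := mul_lt_mul_of_pos_left hq' (mul_pos hw0 hw0)
    calc w ⬝ᵥ Q.mulVec w = (w 0 * w 0) * ((w 0)⁻¹ * (w 0)⁻¹ * (w ⬝ᵥ Q.mulVec w)) := by
          field_simp
      _ < (w 0 * w 0) * β := this
      _ = β * (w 0 * w 0) := mul_comm _ _
  have expand : w ⬝ᵥ (β • vecMulVec (Pi.single 0 1) (Pi.single 0 1) - Q).mulVec w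
      = β * (w 0 * w 0) - w ⬝ᵥ Q.mulVec w := by
    have h1 : w ⬝ᵥ (vecMulVec (Pi.single 0 1 : Fin (k+1) → ℝ) (Pi.single 0 1)).mulVec w
        = w 0 * w 0 := by
      have : (vecMulVec (Pi.single 0 1 : Fin (k+1) → ℝ) (Pi.single 0 1)).mulVec w
          = (w 0) • (Pi.single 0 1 : Fin (k+1) → ℝ) := by
        ext i
        simp [Matrix.mulVec, vecMulVec_apply, dotProduct, Pi.single_apply, mul_ite,
          Finset.sum_ite_eq', mul_comm]
      rw [this, dotProduct_smul, dotProduct_single, smul_eq_mul]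
      ring
    rw [Matrix.sub_mulVec, dotProduct_sub, Matrix.smul_mulVec, dotProduct_smul, h1, smul_eq_mul]
  rw [expand]
  linarith
end

section
/- Under the optimality condition of the no-show model, the feasible values of the dual variable yᵢ are confined to the finite set 𝒴ᵢ = [-d₀, -d₀ + n - i]_ℤ ∪ [C, C + n - i]_ℤ: if yₙ ∈ {-d₀, C} and for each i ∈ [n-1] either yᵢ = -d₀ or yᵢ = y_{i+1} + λ_{i+1} with λ_{i+1} ∈ {0,1}, then yᵢ ∈ 𝒴ᵢ for all i ∈ [n]. -/
theorem stmt18 (n : ℕ) (hn : 1 ≤ n) (d₀ C : ℝ) (hd : 0 ≤ d₀) (hC : 0 ≤ C)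
    (hCd : C ≠ -d₀) (lam : Fin n → ℝ) (hlam : ∀ i, lam i = 0 ∨ lam i = 1)
    (y : Fin n → ℝ)
    (hyn : y ⟨n - 1, by omega⟩ = C ∨ y ⟨n - 1, by omega⟩ = -d₀)
    (hrec : ∀ i j : Fin n, (j : ℕ) = (i : ℕ) + 1 → (y i = -d₀ ∨ y i = y j + lam j)) :
    ∀ i : Fin n, (∃ m : ℕ, m ≤ n - 1 - (i : ℕ) ∧ y i = -d₀ + m) ∨
      (∃ m : ℕ, m ≤ n - 1 - (i : ℕ) ∧ y i = C + m) := by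
  suffices h : ∀ k : ℕ, ∀ i : Fin n, (i : ℕ) + k = n - 1 →
      (∃ m : ℕ, m ≤ n - 1 - (i : ℕ) ∧ y i = -d₀ + m) ∨
      (∃ m : ℕ, m ≤ n - 1 - (i : ℕ) ∧ y i = C + m) by
    intro i
    exact h (n - 1 - (i : ℕ)) i (by omega)
  intro k
  induction k with
  | zero =>
    intro i hi
    have hieq : i = ⟨n - 1, by omega⟩ := Fin.ext (by simpa using hi)
    rcases hyn with h | h
    · right; exact ⟨0, by omega, by rw [hieq, h]; simp⟩
    · left; exact ⟨0, by omega, by rw [hieq, h]; simp⟩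
  | succ k ih =>
    intro i hi
    have hj : (i : ℕ) + 1 < n := by omega
    set j : Fin n := ⟨(i : ℕ) + 1, hj⟩ with hjdef
    rcases hrec i j rfl with h | h
    · left; exact ⟨0, by omega, by rw [h]; simp⟩
    · have hjk : (j : ℕ) + k = n - 1 := by simp [hjdef]; omega
      have hlj := hlam j
      rcases ih j hjk with ⟨m, hm, hy⟩ | ⟨m, hm, hy⟩
      · left
        rcases hlj with hl | hl
        · exact ⟨m, by simp [hjdef] at hm ⊢; omega, by rw [h, hy, hl]; ring⟩
        · exact ⟨m + 1, by simp [hjdef] at hm ⊢; omega, by rw [h, hy, hl]; push_cast; ring⟩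
      · right
        rcases hlj with hl | hl
        · exact ⟨m, by simp [hjdef] at hm ⊢; omega, by rw [h, hy, hl]; ring⟩
        · exact ⟨m + 1, by simp [hjdef] at hm ⊢; omega, by rw [h, hy, hl]; push_cast; ring⟩
end
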